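/- For every 2π-periodic C¹ function f with ∫₀^{2π} f dθ = 0, one has ‖f‖_{L²} ≤ (3/2)^{1/3} ‖f'‖_{L²}^{1/3} ‖f‖_{L¹}^{2/3}. -/

import Mathlib

open Real MeasureTheory intervalIntegral

/-- Cauchy–Schwarz for interval integrals. -/
lemma cs_interval {u v : ℝ → ℝ} (hu : Continuous u) (hv : Continuous v) {a b : ℝ} (hab : a ≤ b) :
    ∫ x in a..b, |u x| * |v x| ≤
      Real.sqrt (∫ x in a..b, u x ^ 2) * Real.sqrt (∫ x in a..b, v x ^ 2) := by
  have hpq : Real.HolderConjugate 2 2 := ⟨by norm_num, by norm_num, by norm_num⟩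
  set μ := volume.restrict (Set.Ioc a b) with hμ
  have hof : (ENNReal.ofReal (2:ℝ)) = 2 := by
    rw [ENNReal.ofReal_ofNat]
  have mem : ∀ w : ℝ → ℝ, Continuous w → MemLp (fun x => |w x|) (ENNReal.ofReal (2:ℝ)) μ := by
    intro w hw
    rw [hof, memLp_two_iff_integrable_sq hw.abs.aestronglyMeasurable]
    have h1 : IntegrableOn (fun x => w x ^ 2) (Set.Ioc a b) volume :=
      ((hw.pow 2).intervalIntegrable a b).1
    exact h1.congr_fun (fun x _ => (sq_abs (w x)).symm) measurableSet_Ioc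
  have H := MeasureTheory.integral_mul_le_Lp_mul_Lq_of_nonneg (μ := μ) hpq
    (Filter.Eventually.of_forall fun x => abs_nonneg (u x))
    (Filter.Eventually.of_forall fun x => abs_nonneg (v x))
    (mem u hu) (mem v hv)
  have e1 : ∫ x, |u x| * |v x| ∂μ = ∫ x in a..b, |u x| * |v x| := by
    rw [intervalIntegral.integral_of_le hab]
  have e2 : ∀ w : ℝ → ℝ, (∫ x, |w x| ^ (2:ℝ) ∂μ) = ∫ x in a..b, w x ^ 2 := by
    intro w
    rw [intervalIntegral.integral_of_le hab]
    refine integral_congr_ae (Filter.Eventually.of_forall fun x => ?_)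
    show |w x| ^ (2:ℝ) = w x ^ 2
    rw [show ((2:ℝ)) = ((2:ℕ):ℝ) by norm_num, Real.rpow_natCast, sq_abs]
  rw [e1, e2 u, e2 v] at H
  calc ∫ x in a..b, |u x| * |v x| ≤
      (∫ x in a..b, u x ^ 2) ^ ((1:ℝ)/2) * (∫ x in a..b, v x ^ 2) ^ ((1:ℝ)/2) := H
    _ = _ := by rw [← Real.sqrt_eq_rpow, ← Real.sqrt_eq_rpow]

lemma ftc_sq {f : ℝ → ℝ} (hf : ContDiff ℝ 1 f) (a b : ℝ) :
    f b ^ 2 - f a ^ 2 = ∫ x in a..b, 2 * f x * deriv f x := by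
  have hc : Continuous (fun x => 2 * f x * deriv f x) :=
    (continuous_const.mul hf.continuous).mul (hf.continuous_deriv le_rfl)
  have hd : ∀ x ∈ Set.uIcc a b, HasDerivAt (fun y => f y ^ 2) (2 * f x * deriv f x) x := by
    intro x _
    have h := (hf.differentiable one_ne_zero x).hasDerivAt
    have h2 := h.fun_pow 2
    rw [show (2:ℝ) * f x * deriv f x = ((2:ℕ):ℝ) * f x ^ (2-1) * deriv f x by norm_num]
    exact h2
  rw [← intervalIntegral.integral_eq_sub_of_hasDerivAt hd (hc.intervalIntegrable a b)]

theorem stmt_7 (f : ℝ → ℝ)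
    (hf : ContDiff ℝ 1 f) (hper : Function.Periodic f (2 * π))
    (hmean : ∫ θ in (0:ℝ)..(2 * π), f θ = 0) :
    Real.sqrt (∫ θ in (0:ℝ)..(2 * π), f θ ^ 2) ≤
      ((3:ℝ) / 2) ^ ((1:ℝ)/3) *
        (Real.sqrt (∫ θ in (0:ℝ)..(2 * π), (deriv f θ) ^ 2)) ^ ((1:ℝ)/3) *
        (∫ θ in (0:ℝ)..(2 * π), |f θ|) ^ ((2:ℝ)/3) := by
  have hcont : Continuous f := hf.continuous
  have hcont' : Continuous (deriv f) := hf.continuous_deriv le_rfl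
  have h2π : (0:ℝ) < 2 * π := by positivity
  -- f vanishes somewhere on [0, 2π]
  have hzero : ∃ c ∈ Set.Icc (0:ℝ) (2*π), f c = 0 := by
    by_contra h
    push_neg at h
    have h0 : f 0 ≠ 0 := h 0 ⟨le_refl 0, h2π.le⟩
    have key : ∀ s : ℝ → ℝ, Continuous s → (∀ x ∈ Set.Icc (0:ℝ) (2*π), s x ≠ 0) →
        0 < s 0 → (∫ θ in (0:ℝ)..(2*π), s θ) ≠ 0 := by
      intro s hs hne hpos
      have hall : ∀ x ∈ Set.Icc (0:ℝ) (2*π), 0 < s x := by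
        intro x hx
        rcases (hne x hx).lt_or_gt with hneg | hp
        · exfalso
          have hsub : Set.uIcc (0:ℝ) x ⊆ Set.Icc (0:ℝ) (2*π) := by
            rw [Set.uIcc_of_le hx.1]
            exact Set.Icc_subset_Icc le_rfl hx.2
          have := intermediate_value_uIcc (a := (0:ℝ)) (b := x) (f := s) hs.continuousOn
          have h0mem : (0:ℝ) ∈ Set.uIcc (s 0) (s x) := by
            rw [Set.mem_uIcc]; right; constructor <;> linarith
          obtain ⟨c, hc, hfc⟩ := this h0mem
          exact hne c (hsub hc) hfc
        · exact hp
      have : 0 < ∫ θ in (0:ℝ)..(2*π), s θ := by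
        apply intervalIntegral.intervalIntegral_pos_of_pos_on (hs.intervalIntegrable 0 (2*π))
          (fun x hx => hall x ⟨hx.1.le, hx.2.le⟩) h2π
      exact this.ne'
    rcases h0.lt_or_gt with hneg | hpos
    · refine key (fun x => -f x) hcont.neg (fun x hx hx0 => h x hx (by linarith [neg_eq_zero.mp hx0]))
        (by simpa using hneg) ?_
      rw [intervalIntegral.integral_neg, hmean, neg_zero]
    · exact key f hcont (fun x hx => h x hx) hpos hmean
  obtain ⟨c, hcmem, hc0⟩ := hzero
  have hc2 : f (c + 2*π) = 0 := by rw [hper c]; exact hc0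
  -- the quantities
  set A := Real.sqrt (∫ θ in (0:ℝ)..(2*π), f θ ^ 2) with hA
  set B := Real.sqrt (∫ θ in (0:ℝ)..(2*π), (deriv f θ) ^ 2) with hB
  set C := ∫ θ in (0:ℝ)..(2*π), |f θ| with hC
  set g : ℝ → ℝ := fun x => |f x| * |deriv f x| with hg
  have hgc : Continuous g := hcont.abs.mul hcont'.abs
  set M := ∫ x in (0:ℝ)..(2*π), g x with hM
  -- periodicity of g
  have hperd : Function.Periodic (deriv f) (2*π) := by
    intro x
    have : (fun y => f (y + 2*π)) = f := funext hper
    rw [← deriv_comp_add_const f (2*π) x, this]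
  have hperg : Function.Periodic g (2*π) := fun x => by
    simp only [hg, hper x, hperd x]
  have hMc : (∫ x in c..(c + 2*π), g x) = M := by
    have := hperg.intervalIntegral_add_eq c 0
    simpa using this
  -- pointwise bound on [c, c+2π]
  have habs : ∀ x ∈ Set.Icc c (c + 2*π), f x ^ 2 ≤ M := by
    intro θ hθ
    have hint : ∀ a b : ℝ, IntervalIntegrable (fun x => 2 * f x * deriv f x) volume a b :=
      fun a b => ((continuous_const.mul hcont).mul hcont').intervalIntegrable a b
    have hintg : ∀ a b : ℝ, IntervalIntegrable g volume a b := fun a b => hgc.intervalIntegrable a b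
    have hbd : ∀ a b : ℝ, a ≤ b → |∫ x in a..b, 2 * f x * deriv f x| ≤ 2 * ∫ x in a..b, g x := by
      intro a b hab
      calc |∫ x in a..b, 2 * f x * deriv f x| ≤ ∫ x in a..b, |2 * f x * deriv f x| :=
            intervalIntegral.abs_integral_le_integral_abs hab
        _ = ∫ x in a..b, 2 * g x := by
            congr 1; funext x
            rw [abs_mul, abs_mul, abs_two, hg, mul_assoc]
        _ = 2 * ∫ x in a..b, g x := intervalIntegral.integral_const_mul 2 g
    have h1 : f θ ^ 2 ≤ 2 * ∫ x in c..θ, g x := by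
      have := ftc_sq hf c θ
      rw [hc0] at this
      have h := hbd c θ hθ.1
      nlinarith [le_abs_self (∫ x in c..θ, 2 * f x * deriv f x)]
    have h2 : f θ ^ 2 ≤ 2 * ∫ x in θ..(c + 2*π), g x := by
      have := ftc_sq hf θ (c + 2*π)
      rw [hc2] at this
      have h := hbd θ (c + 2*π) hθ.2
      nlinarith [neg_abs_le (∫ x in θ..(c + 2*π), 2 * f x * deriv f x)]
    have hadd : (∫ x in c..θ, g x) + ∫ x in θ..(c + 2*π), g x = ∫ x in c..(c + 2*π), g x :=
      intervalIntegral.integral_add_adjacent_intervals (hintg c θ) (hintg θ (c + 2*π))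
    rw [hMc] at hadd
    linarith
  -- pointwise bound on [0, 2π]
  have habs' : ∀ x ∈ Set.Icc (0:ℝ) (2*π), f x ^ 2 ≤ M := by
    intro θ hθ
    rcases le_or_gt c θ with h1 | h1
    · exact habs θ ⟨h1, by linarith [hθ.2, hcmem.1]⟩
    · have : f θ = f (θ + 2*π) := (hper θ).symm
      rw [this]
      exact habs (θ + 2*π) ⟨by linarith [hθ.1, hcmem.2], by linarith⟩
  have hM0 : 0 ≤ M := intervalIntegral.integral_nonneg h2π.le
    (fun x _ => mul_nonneg (abs_nonneg _) (abs_nonneg _))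
  have hC0 : 0 ≤ C := intervalIntegral.integral_nonneg h2π.le (fun x _ => abs_nonneg _)
  have hA0 : 0 ≤ A := Real.sqrt_nonneg _
  have hB0 : 0 ≤ B := Real.sqrt_nonneg _
  -- ∫ f² ≤ C * √M
  have hInt2 : (∫ θ in (0:ℝ)..(2*π), f θ ^ 2) ≤ C * Real.sqrt M := by
    have hmono : (∫ θ in (0:ℝ)..(2*π), f θ ^ 2) ≤ ∫ θ in (0:ℝ)..(2*π), |f θ| * Real.sqrt M := by
      apply intervalIntegral.integral_mono_on h2π.le ((hcont.pow 2).intervalIntegrable 0 (2*π))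
        ((hcont.abs.mul continuous_const).intervalIntegrable 0 (2*π))
      intro x hx
      have h1 : |f x| ≤ Real.sqrt M := Real.abs_le_sqrt (habs' x hx)
      calc f x ^ 2 = |f x| * |f x| := by rw [abs_mul_abs_self, sq]
        _ ≤ |f x| * Real.sqrt M := mul_le_mul_of_nonneg_left h1 (abs_nonneg _)
    rw [intervalIntegral.integral_mul_const] at hmono
    exact hmono
  -- Cauchy–Schwarz: M ≤ A * B
  have hMAB : M ≤ A * B := cs_interval hcont hcont' h2π.le
  -- A² ≤ C √M
  have hIA : (0:ℝ) ≤ ∫ θ in (0:ℝ)..(2*π), f θ ^ 2 :=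
    intervalIntegral.integral_nonneg h2π.le (fun x _ => sq_nonneg _)
  have hA2 : A ^ 2 = ∫ θ in (0:ℝ)..(2*π), f θ ^ 2 := Real.sq_sqrt hIA
  have hkey : A ^ 2 ≤ C * (Real.sqrt A * Real.sqrt B) := by
    calc A ^ 2 ≤ C * Real.sqrt M := hA2 ▸ hInt2
      _ ≤ C * (Real.sqrt A * Real.sqrt B) := by
          apply mul_le_mul_of_nonneg_left _ hC0
          rw [← Real.sqrt_mul hA0]
          exact Real.sqrt_le_sqrt hMAB
  -- conclude A ≤ B^(1/3) * C^(2/3), then done since (3/2)^(1/3) ≥ 1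
  have hmain : A ≤ B ^ ((1:ℝ)/3) * C ^ ((2:ℝ)/3) := by
    rcases eq_or_lt_of_le hA0 with hA0' | hApos
    · rw [← hA0']
      positivity
    · have h32 : A ^ ((3:ℝ)/2) ≤ C * B ^ ((1:ℝ)/2) := by
        rw [show (3:ℝ)/2 = 2 - 1/2 by norm_num, Real.rpow_sub hApos,
          div_le_iff₀ (Real.rpow_pos_of_pos hApos _)]
        calc A ^ (2:ℝ) = A ^ 2 := by rw [show (2:ℝ) = ((2:ℕ):ℝ) by norm_num, Real.rpow_natCast]
          _ ≤ C * (Real.sqrt A * Real.sqrt B) := hkey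
          _ = C * B ^ ((1:ℝ)/2) * A ^ ((1:ℝ)/2) := by
              rw [Real.sqrt_eq_rpow, Real.sqrt_eq_rpow]; ring
      calc A = (A ^ ((3:ℝ)/2)) ^ ((2:ℝ)/3) := by
            rw [← Real.rpow_mul hA0]
            norm_num
          _ ≤ (C * B ^ ((1:ℝ)/2)) ^ ((2:ℝ)/3) := by
            apply Real.rpow_le_rpow (Real.rpow_nonneg hA0 _) h32 (by norm_num)
          _ = B ^ ((1:ℝ)/3) * C ^ ((2:ℝ)/3) := by
            rw [Real.mul_rpow hC0 (Real.rpow_nonneg hB0 _), ← Real.rpow_mul hB0]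
            norm_num [mul_comm]
  have hK : (1:ℝ) ≤ ((3:ℝ)/2) ^ ((1:ℝ)/3) :=
    Real.one_le_rpow (by norm_num) (by norm_num)
  calc A ≤ B ^ ((1:ℝ)/3) * C ^ ((2:ℝ)/3) := hmain
    _ ≤ ((3:ℝ)/2) ^ ((1:ℝ)/3) * (B ^ ((1:ℝ)/3) * C ^ ((2:ℝ)/3)) := by
        apply le_mul_of_one_le_left (by positivity) hK
    _ = ((3:ℝ)/2) ^ ((1:ℝ)/3) * B ^ ((1:ℝ)/3) * C ^ ((2:ℝ)/3) := by ring
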